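/- The number of vertically symmetric Dyck paths of length 2k (Dyck words fixed by reversal composed with up/down swap) equals C(k, k/2) if k is even and (1/2)*C(k+1, (k+1)/2) if k is odd. -/

import Mathlib

/-- Number of up-steps (`true`) among the first `i` steps of `w`. -/
def ups {n : ℕ} (w : Fin n → Bool) (i : ℕ) : ℕ :=
  (Finset.univ.filter fun j : Fin n => (j : ℕ) < i ∧ w j = true).card

/-- Number of down-steps (`false`) among the first `i` steps of `w`. -/
def downs {n : ℕ} (w : Fin n → Bool) (i : ℕ) : ℕ :=
  (Finset.univ.filter fun j : Fin n => (j : ℕ) < i ∧ w j = false).card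

/-- A left factor of a Dyck path: every prefix has at least as many ups as downs. -/
def IsLeftFactor {n : ℕ} (w : Fin n → Bool) : Prop :=
  ∀ i ≤ n, downs w i ≤ ups w i

/-- A Dyck word: a left factor with equally many ups and downs overall. -/
def IsDyckWord {n : ℕ} (w : Fin n → Bool) : Prop :=
  IsLeftFactor w ∧ ups w n = downs w n

/-- The involution on words reversing the word and swapping up-steps with down-steps. -/
def revSwap {n : ℕ} (w : Fin n → Bool) : Fin n → Bool := fun j => ! w j.rev

lemma downs_eq_ups_not {n : ℕ} (w : Fin n → Bool) (i : ℕ) :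
    downs w i = ups (fun j => ! w j) i := by
  unfold downs ups
  congr 1
  apply Finset.filter_congr
  intro j _
  simp

lemma ups_zero {n : ℕ} (w : Fin n → Bool) : ups w 0 = 0 := by
  unfold ups
  simp

lemma ups_succ {n : ℕ} (w : Fin n → Bool) {i : ℕ} (h : i < n) :
    ups w (i + 1) = ups w i + (if w ⟨i, h⟩ then 1 else 0) := by
  unfold ups
  rw [Finset.card_filter, Finset.card_filter]
  have : ∀ j : Fin n, (if ((j : ℕ) < i + 1 ∧ w j = true) then (1:ℕ) else 0)
      = (if ((j : ℕ) < i ∧ w j = true) then 1 else 0)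
        + (if (j = ⟨i, h⟩ ∧ w j = true) then 1 else 0) := by
    intro j
    rcases Nat.lt_trichotomy (j : ℕ) i with hj | hj | hj
    · have hne : j ≠ ⟨i, h⟩ := by intro e; subst e; simp at hj
      simp [hj, Nat.lt_succ_of_lt hj, hne]
    · have he : j = ⟨i, h⟩ := by apply Fin.ext; simp [hj]
      subst he
      simp [hj]
    · have hne : j ≠ ⟨i, h⟩ := by intro e; subst e; simp at hj
      have h1 : ¬ ((j:ℕ) < i + 1) := by omega
      have h2 : ¬ ((j:ℕ) < i) := by omega
      simp [h1, h2, hne]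
  rw [Finset.sum_congr rfl fun j _ => this j, Finset.sum_add_distrib]
  congr 1
  rw [Finset.sum_eq_single (⟨i, h⟩ : Fin n)]
  · simp
  · intro b _ hb; simp [hb]
  · simp

lemma downs_zero {n : ℕ} (w : Fin n → Bool) : downs w 0 = 0 := by
  rw [downs_eq_ups_not, ups_zero]

lemma downs_succ {n : ℕ} (w : Fin n → Bool) {i : ℕ} (h : i < n) :
    downs w (i + 1) = downs w i + (if w ⟨i, h⟩ then 0 else 1) := by
  rw [downs_eq_ups_not, downs_eq_ups_not, ups_succ _ h]
  cases hw : w ⟨i, h⟩ <;> simp [hw]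

lemma ups_add_downs {n : ℕ} (w : Fin n → Bool) {i : ℕ} (hi : i ≤ n) :
    ups w i + downs w i = i := by
  induction i with
  | zero => rw [ups_zero, downs_zero]
  | succ i ih =>
    have h : i < n := hi
    rw [ups_succ _ h, downs_succ _ h]
    have := ih (le_of_lt h)
    cases hw : w ⟨i, h⟩ <;> simp [hw] <;> omega

lemma ups_congr {k n : ℕ} (v : Fin k → Bool) (w : Fin n → Bool) (hkn : k ≤ n)
    (hag : ∀ j : Fin k, w (Fin.castLE hkn j) = v j) {i : ℕ} (hi : i ≤ k) :
    ups w i = ups v i := by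
  induction i with
  | zero => rw [ups_zero, ups_zero]
  | succ i ih =>
    have hik : i < k := hi
    have hin : i < n := lt_of_lt_of_le hik hkn
    rw [ups_succ w hin, ups_succ v hik, ih (le_of_lt hik)]
    have : w ⟨i, hin⟩ = v ⟨i, hik⟩ := hag ⟨i, hik⟩
    rw [this]

lemma downs_congr {k n : ℕ} (v : Fin k → Bool) (w : Fin n → Bool) (hkn : k ≤ n)
    (hag : ∀ j : Fin k, w (Fin.castLE hkn j) = v j) {i : ℕ} (hi : i ≤ k) :
    downs w i = downs v i := by
  rw [downs_eq_ups_not, downs_eq_ups_not]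
  exact ups_congr (fun j => ! v j) (fun j => ! w j) hkn (fun j => by simp only [hag j]) hi

lemma ups_rev_split {n : ℕ} (w : Fin n → Bool) {i : ℕ} (hi : i ≤ n) :
    ups w n = ups w (n - i) + ups (fun j => w j.rev) i := by
  induction i with
  | zero => rw [ups_zero, Nat.sub_zero, Nat.add_zero]
  | succ i ih =>
    have hin : i < n := hi
    have h1 : n - (i + 1) < n := by omega
    have h2 : n - i = (n - (i + 1)) + 1 := by omega
    have ih' := ih (le_of_lt hin)
    rw [h2, ups_succ w h1] at ih'
    have hrev : (Fin.rev ⟨i, hin⟩ : Fin n) = ⟨n - (i + 1), h1⟩ := by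
      apply Fin.ext; simp [Fin.val_rev]
    rw [ups_succ _ hin]
    simp only [hrev]
    omega

lemma revSwap_apply {n : ℕ} {w : Fin n → Bool} (hsym : revSwap w = w) (j : Fin n) :
    w j.rev = ! w j := by
  have := congrFun hsym j
  simp only [revSwap] at this
  cases hw : w j.rev <;> simp [hw] at this ⊢ <;> simp [this]

lemma sym_ups {n : ℕ} {w : Fin n → Bool} (hsym : revSwap w = w) {i : ℕ} (hi : i ≤ n) :
    ups w n = ups w (n - i) + downs w i := by
  rw [ups_rev_split w hi]
  congr 1
  rw [downs_eq_ups_not]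
  congr 1
  funext j
  exact revSwap_apply hsym j

lemma revSwap_not {n : ℕ} {w : Fin n → Bool} (hsym : revSwap w = w) :
    revSwap (fun j => ! w j) = fun j => ! w j := by
  funext j
  simp only [revSwap]
  rw [revSwap_apply hsym j]
  simp

lemma sym_downs {n : ℕ} {w : Fin n → Bool} (hsym : revSwap w = w) {i : ℕ} (hi : i ≤ n) :
    downs w n = downs w (n - i) + ups w i := by
  have h := sym_ups (revSwap_not hsym) hi
  rw [← downs_eq_ups_not, ← downs_eq_ups_not] at h
  have h2 : downs (fun j => !w j) i = ups w i := by
    rw [downs_eq_ups_not]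
    congr 1
    funext j
    simp
  rw [h2] at h
  exact h

/-- Extension of a half-word to a symmetric full word. -/
def extHalf {k : ℕ} (v : Fin k → Bool) : Fin (2 * k) → Bool := fun j =>
  if h : (j : ℕ) < k then v ⟨j, h⟩
  else ! v ⟨2 * k - 1 - j, by have := j.isLt; omega⟩

lemma extHalf_agree {k : ℕ} (v : Fin k → Bool) (j : Fin k) :
    extHalf v (Fin.castLE (by omega) j) = v j := by
  simp only [extHalf, Fin.coe_castLE]
  rw [dif_pos j.isLt]

lemma extHalf_symm {k : ℕ} (v : Fin k → Bool) : revSwap (extHalf v) = extHalf v := by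
  funext j
  have hj := j.isLt
  have hr : ((j.rev : Fin (2 * k)) : ℕ) = 2 * k - (j + 1) := Fin.val_rev j
  simp only [revSwap, extHalf, hr]
  by_cases h : (j : ℕ) < k
  · rw [dif_neg (by omega), dif_pos h]
    have : 2 * k - 1 - (2 * k - ((j:ℕ) + 1)) = (j : ℕ) := by omega
    simp only [this]
    simp
  · rw [dif_pos (by omega), dif_neg h]
    have : 2 * k - ((j:ℕ) + 1) = 2 * k - 1 - (j : ℕ) := by omega
    simp only [this]

lemma extHalf_isDyck {k : ℕ} {v : Fin k → Bool} (hv : IsLeftFactor v) :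
    IsDyckWord (extHalf v) := by
  have hsym := extHalf_symm v
  have hk : k ≤ 2 * k := by omega
  have hbal : ups (extHalf v) (2 * k) = downs (extHalf v) (2 * k) := by
    have := sym_ups hsym (le_refl (2 * k))
    rw [Nat.sub_self, ups_zero] at this
    omega
  constructor
  · intro i hi
    by_cases hik : i ≤ k
    · rw [downs_congr v (extHalf v) hk (extHalf_agree v) hik,
        ups_congr v (extHalf v) hk (extHalf_agree v) hik]
      exact hv i hik
    · push_neg at hik
      have hi' : 2 * k - i ≤ k := by omega
      have e1 := sym_ups hsym hi
      have e2 := sym_downs hsym hi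
      have e3 : downs (extHalf v) (2 * k - i) ≤ ups (extHalf v) (2 * k - i) := by
        rw [downs_congr v (extHalf v) hk (extHalf_agree v) hi',
          ups_congr v (extHalf v) hk (extHalf_agree v) hi']
        exact hv _ hi'
      omega
  · exact hbal

/-- Symmetric Dyck words of length `2k` are in bijection with left factors of length `k`. -/
def symEquiv (k : ℕ) :
    {w : Fin (2 * k) → Bool // IsDyckWord w ∧ revSwap w = w} ≃
      {v : Fin k → Bool // IsLeftFactor v} where
  toFun w := ⟨fun j => w.1 (Fin.castLE (by omega) j), by
    intro i hi
    rw [← downs_congr _ w.1 (by omega) (fun j => rfl) hi,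
      ← ups_congr _ w.1 (by omega) (fun j => rfl) hi]
    exact w.2.1.1 i (by omega)⟩
  invFun v := ⟨extHalf v.1, extHalf_isDyck v.2, extHalf_symm v.1⟩
  left_inv w := by
    apply Subtype.ext
    funext j
    have hj := j.isLt
    simp only [extHalf]
    by_cases h : (j : ℕ) < k
    · rw [dif_pos h]
      congr 1
    · rw [dif_neg h]
      have hsym := w.2.2
      have := revSwap_apply hsym j
      have hrv : (j.rev : ℕ) = 2 * k - ((j : ℕ) + 1) := Fin.val_rev j
      have hidx : (Fin.castLE (by omega : k ≤ 2 * k) ⟨2 * k - 1 - (j : ℕ), by omega⟩ : Fin (2 * k)) = j.rev := by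
        apply Fin.ext
        simp [hrv]
        omega
      rw [hidx, this]
      simp
  right_inv v := by
    apply Subtype.ext
    funext j
    simp only [extHalf, Fin.coe_castLE]
    rw [dif_pos j.isLt]

open DyckStep in
/-- The step list of a word. -/
def toSteps {n : ℕ} (w : Fin n → Bool) : List DyckStep :=
  List.ofFn fun j => if w j then U else D

open DyckStep in
lemma toSteps_count {n : ℕ} (w : Fin n → Bool) {i : ℕ} (hi : i ≤ n) :
    ((toSteps w).take i).count U = ups w i ∧ ((toSteps w).take i).count D = downs w i := by
  have hlen : (toSteps w).length = n := by simp [toSteps]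
  induction i with
  | zero => simp [ups_zero, downs_zero]
  | succ i ih =>
    have hin : i < n := hi
    have h1 : (toSteps w).take (i + 1) = (toSteps w).take i ++ [(toSteps w)[i]'(by omega)] := by
      rw [List.take_succ, List.getElem?_eq_getElem (by omega)]
      rfl
    have h2 : (toSteps w)[i]'(by omega) = if w ⟨i, hin⟩ then U else D := by
      simp [toSteps]
    obtain ⟨ihU, ihD⟩ := ih (le_of_lt hin)
    rw [h1, List.count_append, List.count_append, ihU, ihD,
      ups_succ w hin, downs_succ w hin, h2]
    cases hw : w ⟨i, hin⟩ <;> simp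

open DyckStep

lemma toSteps_count_U {m : ℕ} (w : Fin (2 * m) → Bool) (hw : IsDyckWord w) :
    (toSteps w).count U = (toSteps w).count D := by
  have h := toSteps_count w (le_refl (2 * m))
  rw [List.take_of_length_le (by simp [toSteps])] at h
  rw [h.1, h.2, hw.2]

lemma toSteps_prefix {m : ℕ} (w : Fin (2 * m) → Bool) (hw : IsDyckWord w) (i : ℕ) :
    ((toSteps w).take i).count D ≤ ((toSteps w).take i).count U := by
  by_cases hi : i ≤ 2 * m
  · have h := toSteps_count w hi
    rw [h.1, h.2]
    exact hw.1 i hi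
  · rw [List.take_of_length_le (by simp [toSteps]; omega)]
    have h := toSteps_count w (le_refl (2 * m))
    rw [List.take_of_length_le (by simp [toSteps])] at h
    rw [h.1, h.2, hw.2]

/-- The `DyckWord` corresponding to a function-encoded Dyck word. -/
def toDW {m : ℕ} (w : {w : Fin (2 * m) → Bool // IsDyckWord w}) : DyckWord :=
  ⟨toSteps w.1, toSteps_count_U w.1 w.2, toSteps_prefix w.1 w.2⟩

lemma toDW_semilength {m : ℕ} (w : {w : Fin (2 * m) → Bool // IsDyckWord w}) :
    (toDW w).semilength = m := by
  show (toSteps w.1).count U = m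
  have h := toSteps_count w.1 (le_refl (2 * m))
  rw [List.take_of_length_le (by simp [toSteps])] at h
  have h2 := ups_add_downs w.1 (le_refl (2 * m))
  have h3 := w.2.2
  omega

lemma dw_length {m : ℕ} (p : DyckWord) (hp : p.semilength = m) : p.toList.length = 2 * m := by
  rw [← p.two_mul_semilength_eq_length, hp]

/-- The function-encoded word corresponding to a `DyckWord`. -/
def ofDW {m : ℕ} (p : {p : DyckWord // p.semilength = m}) : Fin (2 * m) → Bool :=
  fun j => decide (p.1.toList[(j : ℕ)]'(by rw [dw_length p.1 p.2]; exact j.isLt) = U)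

lemma toSteps_ofDW {m : ℕ} (p : {p : DyckWord // p.semilength = m}) :
    toSteps (ofDW p) = p.1.toList := by
  apply List.ext_getElem
  · simp [toSteps, dw_length p.1 p.2]
  · intro i h1 h2
    simp only [toSteps, ofDW, List.getElem_ofFn]
    rcases (p.1.toList[i]'h2).dichotomy with h | h <;> simp [h]

lemma ofDW_isDyck {m : ℕ} (p : {p : DyckWord // p.semilength = m}) : IsDyckWord (ofDW p) := by
  constructor
  · intro i hi
    have h := toSteps_count (ofDW p) hi
    rw [toSteps_ofDW] at h
    rw [← h.1, ← h.2]
    exact p.1.count_D_le_count_U i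
  · have h := toSteps_count (ofDW p) (le_refl (2 * m))
    rw [toSteps_ofDW, List.take_of_length_le (by rw [dw_length p.1 p.2])] at h
    rw [← h.1, ← h.2, p.1.count_U_eq_count_D]

/-- Dyck words of length `2m` in the function encoding vs `DyckWord`s of semilength `m`. -/
def dyckEquiv (m : ℕ) :
    {w : Fin (2 * m) → Bool // IsDyckWord w} ≃ {p : DyckWord // p.semilength = m} where
  toFun w := ⟨toDW w, toDW_semilength w⟩
  invFun p := ⟨ofDW p, ofDW_isDyck p⟩
  left_inv w := by
    apply Subtype.ext
    funext j
    show decide ((toSteps w.1)[(j : ℕ)]'_ = U) = w.1 j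
    simp only [toSteps, List.getElem_ofFn]
    cases hw : w.1 j <;> simp [hw]
  right_inv p := by
    apply Subtype.ext
    apply DyckWord.ext
    exact toSteps_ofDW p

/-- Append one letter to a word. -/
def app {n : ℕ} (v : Fin n → Bool) (b : Bool) : Fin (n + 1) → Bool := fun j =>
  if h : (j : ℕ) < n then v ⟨j, h⟩ else b

lemma app_agree {n : ℕ} (v : Fin n → Bool) (b : Bool) (j : Fin n) :
    app v b (Fin.castLE (by omega) j) = v j := by
  simp only [app, Fin.coe_castLE]
  rw [dif_pos j.isLt]

lemma app_isLF {n : ℕ} {v : Fin n → Bool} (hv : IsLeftFactor v) {b : Bool}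
    (hb : b = true ∨ ups v n ≠ downs v n) : IsLeftFactor (app v b) := by
  intro i hi
  rcases Nat.lt_or_ge i (n + 1) with h | h
  · rcases Nat.lt_or_ge i n with h2 | h2
    · rw [ups_congr v (app v b) (by omega) (app_agree v b) (le_of_lt h2),
        downs_congr v (app v b) (by omega) (app_agree v b) (le_of_lt h2)]
      exact hv i (le_of_lt h2)
    · have hi' : i = n := by omega
      subst hi'
      rw [ups_congr v (app v b) (by omega) (app_agree v b) le_rfl,
        downs_congr v (app v b) (by omega) (app_agree v b) le_rfl]
      exact hv _ le_rfl
  · have hi' : i = n + 1 := by omega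
    subst hi'
    have hn : n < n + 1 := by omega
    rw [ups_succ (app v b) hn, downs_succ (app v b) hn,
      ups_congr v (app v b) (by omega) (app_agree v b) le_rfl,
      downs_congr v (app v b) (by omega) (app_agree v b) le_rfl]
    have hlast : app v b ⟨n, hn⟩ = b := by simp [app]
    rw [hlast]
    have := hv n le_rfl
    cases b
    · simp only [if_neg Bool.false_ne_true, Bool.false_eq_true, if_false]
      rcases hb with h | h
      · exact absurd h (by simp)
      · omega
    · simp
      omega

/-- The restriction of a word to all but its last letter. -/
def restr {n : ℕ} (w : Fin (n + 1) → Bool) : Fin n → Bool :=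
  fun j => w (Fin.castLE (by omega) j)

lemma restr_isLF {n : ℕ} {w : Fin (n + 1) → Bool} (hw : IsLeftFactor w) :
    IsLeftFactor (restr w) := by
  intro i hi
  rw [← ups_congr (restr w) w (by omega) (fun j => rfl) hi,
    ← downs_congr (restr w) w (by omega) (fun j => rfl) hi]
  exact hw i (by omega)

lemma restr_ne {n : ℕ} {w : Fin (n + 1) → Bool} (hw : IsLeftFactor w)
    (hl : w (Fin.last n) = false) : ups (restr w) n ≠ downs (restr w) n := by
  have hn : n < n + 1 := by omega
  have h1 := hw (n + 1) le_rfl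
  rw [ups_succ w hn, downs_succ w hn] at h1
  have hlast : w ⟨n, hn⟩ = false := hl
  rw [hlast] at h1
  simp at h1
  rw [← ups_congr (restr w) w (by omega) (fun j => rfl) le_rfl,
    ← downs_congr (restr w) w (by omega) (fun j => rfl) le_rfl]
  omega

/-- The extension recursion for left factors. -/
def stepEquiv (n : ℕ) : {w : Fin (n + 1) → Bool // IsLeftFactor w} ≃
    ({v : Fin n → Bool // IsLeftFactor v} ⊕
      {v : Fin n → Bool // IsLeftFactor v ∧ ups v n ≠ downs v n}) where
  toFun w :=
    if hb : w.1 (Fin.last n) = true then Sum.inl ⟨restr w.1, restr_isLF w.2⟩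
    else Sum.inr ⟨restr w.1, restr_isLF w.2, restr_ne w.2 (by simpa using hb)⟩
  invFun s := match s with
    | Sum.inl v => ⟨app v.1 true, app_isLF v.2 (Or.inl rfl)⟩
    | Sum.inr v => ⟨app v.1 false, app_isLF v.2.1 (Or.inr v.2.2)⟩
  left_inv w := by
    by_cases hb : w.1 (Fin.last n) = true <;>
    · simp only [hb, dif_pos, dif_neg, Bool.false_eq_true, reduceDIte]
      apply Subtype.ext
      funext j
      simp only [app, restr]
      by_cases hj : (j : ℕ) < n
      · rw [dif_pos hj]
        congr 1
      · rw [dif_neg hj]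
        have : j = Fin.last n := by
          apply Fin.ext
          have := j.isLt
          simp only [Fin.val_last]
          omega
        rw [this]
        first
          | exact hb.symm
          | (rw [Bool.not_eq_true] at hb; exact hb.symm)
  right_inv s := by
    rcases s with v | v
    · have hl : app v.1 true (Fin.last n) = true := by
        simp [app]
      dsimp only
      rw [dif_pos hl]
      congr 1
      apply Subtype.ext
      funext j
      simp only [restr, app, Fin.coe_castLE]
      rw [dif_pos j.isLt]
    · have hl : ¬ app v.1 false (Fin.last n) = true := by
        simp [app]
      dsimp only
      rw [dif_neg hl]
      congr 1
      apply Subtype.ext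
      funext j
      simp only [restr, app, Fin.coe_castLE]
      rw [dif_pos j.isLt]

lemma choose_identity_even (m : ℕ) :
    (2 * m + 1).choose m + catalan m = 2 * (2 * m).choose m := by
  have h4 : (2 * m + 1).choose (m + 1) = (2 * m + 1).choose m := by
    rw [← Nat.choose_symm (by omega : m ≤ 2 * m + 1)]
    congr 1
    omega
  have h1 := succ_mul_catalan_eq_centralBinom m
  have h2 : Nat.centralBinom m = (2 * m).choose m := rfl
  rw [h2] at h1
  have e1 : (m + 1) * (2 * m + 1).choose m = (2 * m + 1) * (2 * m).choose m := by
    calc (m + 1) * (2 * m + 1).choose m = (2 * m + 1).choose m * (m + 1) := mul_comm _ _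
      _ = (2 * m + 1).choose (m + 1) * (m + 1) := by rw [h4]
      _ = (2 * m + 1) * (2 * m).choose m := (Nat.add_one_mul_choose_eq (2 * m) m).symm
  apply Nat.eq_of_mul_eq_mul_left (show 0 < m + 1 by omega)
  rw [Nat.mul_add, e1, h1]
  ring

lemma choose_identity_odd (m : ℕ) :
    (2 * m + 2).choose (m + 1) = 2 * (2 * m + 1).choose m := by
  have h4 : (2 * m + 1).choose (m + 1) = (2 * m + 1).choose m := by
    rw [← Nat.choose_symm (by omega : m ≤ 2 * m + 1)]
    congr 1
    omega
  have h5 := Nat.choose_succ_succ' (2 * m + 1) m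
  rw [show (2 * m + 1) + 1 = 2 * m + 2 from rfl] at h5
  omega

instance {n : ℕ} : DecidablePred (IsLeftFactor (n := n)) := fun w => by
  unfold IsLeftFactor; infer_instance

instance {n : ℕ} : DecidablePred (IsDyckWord (n := n)) := fun w => by
  unfold IsDyckWord; infer_instance

/-- Left factors split into Dyck words and strict left factors. -/
def splitEquiv (n : ℕ) : {v : Fin n → Bool // IsLeftFactor v} ≃
    ({v : Fin n → Bool // IsDyckWord v} ⊕
      {v : Fin n → Bool // IsLeftFactor v ∧ ups v n ≠ downs v n}) where
  toFun v := if h : ups v.1 n = downs v.1 n then Sum.inl ⟨v.1, v.2, h⟩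
    else Sum.inr ⟨v.1, v.2, h⟩
  invFun s := match s with
    | Sum.inl v => ⟨v.1, v.2.1⟩
    | Sum.inr v => ⟨v.1, v.2.1⟩
  left_inv v := by
    by_cases h : ups v.1 n = downs v.1 n
    · dsimp only
      rw [dif_pos h]
    · dsimp only
      rw [dif_neg h]
  right_inv s := by
    rcases s with v | v
    · dsimp only
      rw [dif_pos v.2.2]
    · dsimp only
      rw [dif_neg v.2.2]

lemma card_LF_zero : Nat.card {w : Fin 0 → Bool // IsLeftFactor w} = 1 := by
  have hall : ∀ w : Fin 0 → Bool, IsLeftFactor w := by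
    intro w i hi
    have hz : i = 0 := by omega
    subst hz
    rw [ups_zero, downs_zero]
  rw [Nat.card_congr (Equiv.subtypeUnivEquiv hall)]
  simp [Nat.card_eq_fintype_card]

lemma card_dyck_even (m : ℕ) :
    Nat.card {w : Fin (2 * m) → Bool // IsDyckWord w} = catalan m := by
  rw [Nat.card_congr (dyckEquiv m), Nat.card_eq_fintype_card]
  exact DyckWord.card_dyckWord_semilength_eq_catalan m

lemma card_dyck_odd (m : ℕ) :
    Nat.card {w : Fin (2 * m + 1) → Bool // IsDyckWord w} = 0 := by
  have : IsEmpty {w : Fin (2 * m + 1) → Bool // IsDyckWord w} := by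
    constructor
    rintro ⟨w, hw⟩
    have h1 := ups_add_downs w (le_refl (2 * m + 1))
    have h2 := hw.2
    omega
  exact Nat.card_of_isEmpty

lemma card_rec (n : ℕ) : Nat.card {w : Fin (n + 1) → Bool // IsLeftFactor w}
    + Nat.card {w : Fin n → Bool // IsDyckWord w}
    = 2 * Nat.card {w : Fin n → Bool // IsLeftFactor w} := by
  have h1 := Nat.card_congr (stepEquiv n)
  have h2 := Nat.card_congr (splitEquiv n)
  rw [Nat.card_sum] at h1 h2
  omega

lemma card_LF (n : ℕ) :
    Nat.card {w : Fin n → Bool // IsLeftFactor w} = n.choose (n / 2) := by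
  induction n with
  | zero => rw [card_LF_zero]; rfl
  | succ n ih =>
    have h := card_rec n
    rw [ih] at h
    rcases Nat.even_or_odd' n with ⟨m, hm | hm⟩
    · subst hm
      rw [card_dyck_even] at h
      have hi := choose_identity_even m
      rw [show 2 * m / 2 = m by omega] at h
      rw [show (2 * m + 1) / 2 = m by omega]
      exact Nat.add_right_cancel (h.trans hi.symm)
    · subst hm
      rw [card_dyck_odd m] at h
      have hi := choose_identity_odd m
      rw [show (2 * m + 1) / 2 = m by omega] at h
      rw [show 2 * m + 1 + 1 = 2 * m + 2 from rfl, show (2 * m + 2) / 2 = m + 1 by omega]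
      rw [hi]
      simpa using h

/-- The number of vertically symmetric Dyck paths of length `2k` (Dyck words fixed by
reversal composed with up/down swap) equals `C(k, k/2)` if `k` is even and
`(1/2) C(k+1, (k+1)/2)` if `k` is odd. -/
theorem stmt6 (k : ℕ) :
    Nat.card {w : Fin (2 * k) → Bool // IsDyckWord w ∧ revSwap w = w} =
      if Even k then k.choose (k / 2) else (k + 1).choose ((k + 1) / 2) / 2 := by
  rw [Nat.card_congr (symEquiv k), card_LF k]
  rcases Nat.even_or_odd k with he | ho
  · rw [if_pos he]
  · rw [if_neg (Nat.not_even_iff_odd.symm.mp ho)]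
    obtain ⟨m, hm⟩ := ho
    subst hm
    have hi := choose_identity_odd m
    rw [show (2 * m + 1) / 2 = m by omega, show 2 * m + 1 + 1 = 2 * m + 2 from rfl,
      show (2 * m + 2) / 2 = m + 1 by omega]
    omega
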